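/- Let N ≥ 1, let λ be a σ-finite Borel measure on ℝ^N, let M > 0 and let r : ℝ^N → (0, ∞) be measurable with r(x) ≤ M for all x, and let β ≥ 2 be such that for every x ∈ ℝ^N, sup{ r(x+v) : v ∈ ℝ^N, |v| ≤ 2M } ≤ (β−1)·r(x). Then for every γ ≥ 0, ∫_{ℝ^N} ∫_{ℝ^N} |x−y|^γ · 1{|x−y| ≤ r(x)+r(y)} dλ(y) dλ(x) ≤ β^γ · ∫_{ℝ^N} r(x)^γ · λ(B̄(x, β·r(x))) dλ(x), where the inequality is understood in [0,∞]. -/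

import Mathlib

open Real MeasureTheory ENNReal

/-- Bound on the `L_1` norm of the power length kernel:
`∫∫ |x-y|^γ 1{|x-y| ≤ r(x)+r(y)} dλ(y)dλ(x) ≤ β^γ ∫ r(x)^γ λ(B̄(x, β r(x))) dλ(x)`,
under the regularity condition `sup{r(x+v) : |v| ≤ 2M} ≤ (β-1) r(x)`. -/
theorem stmt_6 (N : ℕ) (hN : 1 ≤ N)
    (lam : Measure (EuclideanSpace ℝ (Fin N))) [SigmaFinite lam]
    (M : ℝ) (hM : 0 < M)
    (r : EuclideanSpace ℝ (Fin N) → ℝ) (hrmeas : Measurable r)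
    (hrpos : ∀ x, 0 < r x) (hrM : ∀ x, r x ≤ M)
    (β : ℝ) (hβ : 2 ≤ β)
    (hreg : ∀ x v, ‖v‖ ≤ 2 * M → r (x + v) ≤ (β - 1) * r x)
    (γ : ℝ) (hγ : 0 ≤ γ) :
    (∫⁻ x, ∫⁻ y, ENNReal.ofReal (‖x - y‖ ^ γ *
        (if ‖x - y‖ ≤ r x + r y then (1 : ℝ) else 0)) ∂lam ∂lam) ≤
      ENNReal.ofReal (β ^ γ) *
        ∫⁻ x, ENNReal.ofReal (r x ^ γ) * lam (Metric.closedBall x (β * r x)) ∂lam := by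
  have hβ0 : (0:ℝ) ≤ β ^ γ := Real.rpow_nonneg (by linarith) γ
  have key : ∀ x, (∫⁻ y, ENNReal.ofReal (‖x - y‖ ^ γ *
      (if ‖x - y‖ ≤ r x + r y then (1 : ℝ) else 0)) ∂lam) ≤
      ENNReal.ofReal (β ^ γ * r x ^ γ) * lam (Metric.closedBall x (β * r x)) := by
    intro x
    have hbd : ∀ y, ENNReal.ofReal (‖x - y‖ ^ γ *
        (if ‖x - y‖ ≤ r x + r y then (1 : ℝ) else 0)) ≤
        (Metric.closedBall x (β * r x)).indicator
          (fun _ => ENNReal.ofReal (β ^ γ * r x ^ γ)) y := by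
      intro y
      by_cases h : ‖x - y‖ ≤ r x + r y
      · have hry : r y ≤ (β - 1) * r x := by
          have : r y = r (x + (y - x)) := by
            congr 1; abel
          rw [this]
          apply hreg
          have h1 : ‖y - x‖ ≤ r x + r y := by rwa [norm_sub_rev] at h
          have := hrM x; have := hrM y
          linarith
        have hxy : ‖x - y‖ ≤ β * r x := by linarith
        have hmem : y ∈ Metric.closedBall x (β * r x) := by
          rw [Metric.mem_closedBall, dist_comm, dist_eq_norm]
          exact hxy
        rw [Set.indicator_of_mem hmem, if_pos h, mul_one]
        apply ENNReal.ofReal_le_ofReal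
        calc ‖x - y‖ ^ γ ≤ (β * r x) ^ γ :=
              Real.rpow_le_rpow (norm_nonneg _) hxy hγ
          _ = β ^ γ * r x ^ γ :=
              Real.mul_rpow (by linarith) (hrpos x).le
      · rw [if_neg h, mul_zero, ENNReal.ofReal_zero]
        exact zero_le
    calc (∫⁻ y, ENNReal.ofReal (‖x - y‖ ^ γ *
          (if ‖x - y‖ ≤ r x + r y then (1 : ℝ) else 0)) ∂lam) ≤
        ∫⁻ y, (Metric.closedBall x (β * r x)).indicator
          (fun _ => ENNReal.ofReal (β ^ γ * r x ^ γ)) y ∂lam :=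
          lintegral_mono hbd
      _ = ENNReal.ofReal (β ^ γ * r x ^ γ) * lam (Metric.closedBall x (β * r x)) := by
          simp [lintegral_indicator Metric.isClosed_closedBall.measurableSet, mul_comm]
  calc (∫⁻ x, ∫⁻ y, ENNReal.ofReal (‖x - y‖ ^ γ *
        (if ‖x - y‖ ≤ r x + r y then (1 : ℝ) else 0)) ∂lam ∂lam) ≤
      ∫⁻ x, ENNReal.ofReal (β ^ γ * r x ^ γ) * lam (Metric.closedBall x (β * r x)) ∂lam :=
        lintegral_mono key
    _ = ENNReal.ofReal (β ^ γ) *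
        ∫⁻ x, ENNReal.ofReal (r x ^ γ) * lam (Metric.closedBall x (β * r x)) ∂lam := by
        rw [← lintegral_const_mul' _ _ ENNReal.ofReal_ne_top]
        congr 1 with x
        rw [ENNReal.ofReal_mul hβ0, mul_assoc]
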